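/- arXiv:1402.0129 — 2 statements merged into one kernel-verified Lean document; each statement's English description precedes it below -/
import Mathlib

section
/- For any d×d unitary matrix U, the vector W = (s₁, s₂−s₁, …, s_d−s_{d−1}) is majorized by the vector Q^{(d−1)} = (R₁, R₂−R₁, …, R_d−R_{d−1}), where R_i = ((1+s_i)/2)². Consequently the direct-sum majorization bound B_Maj2 is never weaker than the tensor-product majorization bound B_Maj1. -/
open scoped BigOperators Matrix ComplexConjugate ComplexOrder

/-- Shannon entropy of a finite real vector (natural logarithm). -/
noncomputable def shannonEntropy {n : Type*} [Fintype n] (x : n → ℝ) : ℝ :=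
  -∑ i, x i * Real.log (x i)

/-- Von Neumann entropy of a Hermitian matrix, `-∑ λᵢ ln λᵢ`. -/
noncomputable def vonNeumannEntropy {d : ℕ} {ρ : Matrix (Fin d) (Fin d) ℂ}
    (hρ : ρ.IsHermitian) : ℝ :=
  -∑ i, hρ.eigenvalues i * Real.log (hρ.eigenvalues i)

/-- `Majorizes x y` means `x ≺ y`: the vectors have equal total sums and, for every `k`,
the sum of the `k` largest entries of `x` is at most the sum of the `k` largest entries
of `y` (formulated via subsets; the two index types may differ, which corresponds to
padding the shorter vector with zeros). -/
def Majorizes {ι κ : Type*} [Fintype ι] [Fintype κ] (x : ι → ℝ) (y : κ → ℝ) : Prop :=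
  (∑ i, x i = ∑ j, y j) ∧
  ∀ A : Finset ι, ∃ B : Finset κ, B.card ≤ A.card ∧ ∑ i ∈ A, x i ≤ ∑ j ∈ B, y j

/-- The operator norm (largest singular value) of the submatrix of `U` with rows `I`
and columns `J`, expressed as the supremum of `|⟨x, U y⟩|` over unit vectors supported
on `I` resp. `J`. -/
noncomputable def subOpNorm {d : ℕ} (U : Matrix (Fin d) (Fin d) ℂ)
    (I J : Finset (Fin d)) : ℝ :=
  sSup { r : ℝ | ∃ (x : I → ℂ) (y : J → ℂ),
    (∑ i, ‖x i‖ ^ 2 = 1) ∧ (∑ j, ‖y j‖ ^ 2 = 1) ∧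
    r = ‖∑ i : I, ∑ j : J, (starRingEnd ℂ) (x i) * U i.1 j.1 * y j‖ }

/-- `sCoef U k` is the coefficient `s_k`: the maximal operator norm of a submatrix of `U`
of class `k`, i.e. with `#rows + #cols = k + 1` (for `k = 0` the set is empty and the
supremum equals `0`). -/
noncomputable def sCoef {d : ℕ} (U : Matrix (Fin d) (Fin d) ℂ) (k : ℕ) : ℝ :=
  sSup { r : ℝ | ∃ I J : Finset (Fin d), I.Nonempty ∧ J.Nonempty ∧
    I.card + J.card = k + 1 ∧ r = subOpNorm U I J }

/-- The vector `W = (s₁, s₂ - s₁, …, s_d - s_{d-1})`. -/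
noncomputable def Wvec {d : ℕ} (U : Matrix (Fin d) (Fin d) ℂ) : Fin d → ℝ :=
  fun k => sCoef U (k.val + 1) - (if k.val = 0 then 0 else sCoef U k.val)

namespace Aux
variable {d : ℕ}

lemma conj_mul_self (z : ℂ) : conj z * z = ((‖z‖^2 : ℝ) : ℂ) := by
  rw [mul_comm, Complex.mul_conj, Complex.normSq_eq_norm_sq]

lemma cs_norm {ι : Type*} (s : Finset ι) (a c : ι → ℂ) :
    ‖∑ i ∈ s, conj (a i) * c i‖ ≤
      Real.sqrt (∑ i ∈ s, ‖a i‖^2) * Real.sqrt (∑ i ∈ s, ‖c i‖^2) := by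
  have h1 : ‖∑ i ∈ s, conj (a i) * c i‖ ≤ ∑ i ∈ s, ‖a i‖ * ‖c i‖ := by
    refine (norm_sum_le s _).trans_eq (Finset.sum_congr rfl fun i _ => ?_)
    rw [norm_mul, RCLike.norm_conj]
  have h2 := Finset.sum_mul_sq_le_sq_mul_sq s (fun i => ‖a i‖) (fun i => ‖c i‖)
  have h3 : ∑ i ∈ s, ‖a i‖ * ‖c i‖ ≤
      Real.sqrt ((∑ i ∈ s, ‖a i‖^2) * ∑ i ∈ s, ‖c i‖^2) := by
    rw [show (∑ i ∈ s, ‖a i‖ * ‖c i‖) = Real.sqrt ((∑ i ∈ s, ‖a i‖ * ‖c i‖)^2) from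
      (Real.sqrt_sq (Finset.sum_nonneg fun i _ => mul_nonneg (norm_nonneg _) (norm_nonneg _))).symm]
    exact Real.sqrt_le_sqrt h2
  rw [← Real.sqrt_mul (Finset.sum_nonneg fun i _ => sq_nonneg _)]
  exact h1.trans h3

lemma sum_normsq_cast (v : Fin d → ℂ) : ((∑ i, ‖v i‖^2 : ℝ) : ℂ) = star v ⬝ᵥ v := by
  push_cast
  simp only [dotProduct, Pi.star_apply]
  refine Finset.sum_congr rfl fun i _ => ?_
  rw [show (star (v i)) = conj (v i) from rfl, conj_mul_self]
  push_cast; ring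

lemma mulVec_norm {U : Matrix (Fin d) (Fin d) ℂ} (hU : U ∈ Matrix.unitaryGroup (Fin d) ℂ)
    (b : Fin d → ℂ) : ∑ i, ‖U.mulVec b i‖^2 = ∑ i, ‖b i‖^2 := by
  have key : star (U.mulVec b) ⬝ᵥ (U.mulVec b) = star b ⬝ᵥ b := by
    rw [Matrix.star_mulVec, Matrix.dotProduct_mulVec, Matrix.vecMul_vecMul,
      ← Matrix.star_eq_conjTranspose, hU.1, Matrix.vecMul_one]
  have : ((∑ i, ‖U.mulVec b i‖^2 : ℝ) : ℂ) = ((∑ i, ‖b i‖^2 : ℝ) : ℂ) := by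
    rw [sum_normsq_cast, sum_normsq_cast, key]
  exact_mod_cast this

def oSet (U : Matrix (Fin d) (Fin d) ℂ) (I J : Finset (Fin d)) : Set ℝ :=
  { r : ℝ | ∃ (x : I → ℂ) (y : J → ℂ),
    (∑ i, ‖x i‖ ^ 2 = 1) ∧ (∑ j, ‖y j‖ ^ 2 = 1) ∧
    r = ‖∑ i : I, ∑ j : J, (starRingEnd ℂ) (x i) * U i.1 j.1 * y j‖ }

lemma subOpNorm_eq (U : Matrix (Fin d) (Fin d) ℂ) (I J : Finset (Fin d)) :
    subOpNorm U I J = sSup (oSet U I J) := rfl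

lemma sum_ext_eq (I : Finset (Fin d)) (a : Fin d → ℂ) (f : ℂ → Fin d → ℝ)
    (ha : ∀ i ∉ I, f (a i) i = 0) : ∑ i : I, f (a i.1) i.1 = ∑ i, f (a i) i := by
  rw [Finset.sum_coe_sort I (fun i => f (a i) i)]
  exact Finset.sum_subset (Finset.subset_univ I) (fun i _ hi => ha i hi)

lemma mem_oSet (U : Matrix (Fin d) (Fin d) ℂ) (I J : Finset (Fin d)) (a b : Fin d → ℂ)
    (ha : ∀ i ∉ I, a i = 0) (hb : ∀ j ∉ J, b j = 0)
    (hna : ∑ i, ‖a i‖ ^ 2 = 1) (hnb : ∑ j, ‖b j‖ ^ 2 = 1) :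
    ‖∑ i ∈ I, ∑ j ∈ J, conj (a i) * U i j * b j‖ ∈ oSet U I J := by
  refine ⟨fun i => a i.1, fun j => b j.1, ?_, ?_, ?_⟩
  · rw [Finset.sum_coe_sort I (fun i => ‖a i‖ ^ 2), ← hna]
    exact Finset.sum_subset (Finset.subset_univ I) (fun i _ hi => by rw [ha i hi]; simp)
  · rw [Finset.sum_coe_sort J (fun j => ‖b j‖ ^ 2), ← hnb]
    exact Finset.sum_subset (Finset.subset_univ J) (fun j _ hj => by rw [hb j hj]; simp)
  · congr 1
    rw [← Finset.sum_coe_sort I (fun i => ∑ j ∈ J, conj (a i) * U i j * b j)]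
    exact Finset.sum_congr rfl fun i _ =>
      (Finset.sum_coe_sort J (fun j => conj (a i.1) * U i.1 j * b j)).symm

lemma exists_rep (U : Matrix (Fin d) (Fin d) ℂ) (I J : Finset (Fin d)) (r : ℝ)
    (hr : r ∈ oSet U I J) :
    ∃ a b : Fin d → ℂ, (∀ i ∉ I, a i = 0) ∧ (∀ j ∉ J, b j = 0) ∧
      (∑ i, ‖a i‖ ^ 2 = 1) ∧ (∑ j, ‖b j‖ ^ 2 = 1) ∧
      r = ‖∑ i ∈ I, ∑ j ∈ J, conj (a i) * U i j * b j‖ := by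
  obtain ⟨x, y, hx, hy, hv⟩ := hr
  refine ⟨fun i => if h : i ∈ I then x ⟨i, h⟩ else 0,
          fun j => if h : j ∈ J then y ⟨j, h⟩ else 0, ?_, ?_, ?_, ?_, ?_⟩
  · intro i hi; simp only [dif_neg hi]
  · intro j hj; simp only [dif_neg hj]
  · rw [← sum_ext_eq I _ (fun z i => ‖z‖ ^ 2) (fun i hi => by rw [dif_neg hi]; simp), ← hx]
    exact Finset.sum_congr rfl fun i _ => by rw [dif_pos i.2]
  · rw [← sum_ext_eq J _ (fun z j => ‖z‖ ^ 2) (fun j hj => by rw [dif_neg hj]; simp), ← hy]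
    exact Finset.sum_congr rfl fun j _ => by rw [dif_pos j.2]
  · rw [hv]; congr 1
    rw [← Finset.sum_coe_sort I
      (fun i => ∑ j ∈ J, conj (if h : i ∈ I then x ⟨i, h⟩ else 0) * U i j *
        (if h : j ∈ J then y ⟨j, h⟩ else 0))]
    refine Finset.sum_congr rfl fun i _ => ?_
    rw [← Finset.sum_coe_sort J
      (fun j => conj (if h : i.1 ∈ I then x ⟨i.1, h⟩ else 0) * U i.1 j *
        (if h : j ∈ J then y ⟨j, h⟩ else 0))]
    exact Finset.sum_congr rfl fun j _ => by rw [dif_pos i.2, dif_pos j.2]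
end Aux

namespace Aux2
open Aux
variable {d : ℕ} {U : Matrix (Fin d) (Fin d) ℂ} {I J : Finset (Fin d)}

lemma inner_rw (a b : Fin d → ℂ) (hb : ∀ j ∉ J, b j = 0) (i : Fin d) :
    ∑ j ∈ J, conj (a i) * U i j * b j = conj (a i) * U.mulVec b i := by
  rw [show U.mulVec b i = ∑ j, U i j * b j from by
      simp [Matrix.mulVec, dotProduct], Finset.mul_sum]
  rw [Finset.sum_subset (Finset.subset_univ J)
    (fun j _ hj => by rw [hb j hj, mul_zero])]
  exact Finset.sum_congr rfl fun j _ => (mul_assoc _ _ _)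

lemma val_eq_inner (a b : Fin d → ℂ) (ha : ∀ i ∉ I, a i = 0) (hb : ∀ j ∉ J, b j = 0) :
    ∑ i ∈ I, ∑ j ∈ J, conj (a i) * U i j * b j = ∑ i, conj (a i) * U.mulVec b i := by
  rw [Finset.sum_congr rfl (fun i _ => inner_rw a b hb i)]
  exact Finset.sum_subset (Finset.subset_univ I)
    (fun i _ hi => by rw [ha i hi, map_zero, zero_mul])

lemma oSet_le_one (hU : U ∈ Matrix.unitaryGroup (Fin d) ℂ) :
    ∀ r ∈ oSet U I J, r ≤ 1 := by
  intro r hr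
  obtain ⟨a, b, ha, hb, hna, hnb, hv⟩ := exists_rep U I J r hr
  rw [hv, val_eq_inner a b ha hb]
  calc ‖∑ i, conj (a i) * U.mulVec b i‖
      ≤ Real.sqrt (∑ i, ‖a i‖^2) * Real.sqrt (∑ i, ‖U.mulVec b i‖^2) :=
        cs_norm Finset.univ a (U.mulVec b)
    _ = 1 := by rw [mulVec_norm hU b, hna, hnb]; simp

lemma oSet_nonneg : ∀ r ∈ oSet U I J, 0 ≤ r := by
  rintro r ⟨x, y, _, _, hv⟩; rw [hv]; exact norm_nonneg _

lemma oSet_bdd (hU : U ∈ Matrix.unitaryGroup (Fin d) ℂ) : BddAbove (oSet U I J) :=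
  ⟨1, oSet_le_one hU⟩

def cSet (U : Matrix (Fin d) (Fin d) ℂ) (k : ℕ) : Set ℝ :=
  { r : ℝ | ∃ I J : Finset (Fin d), I.Nonempty ∧ J.Nonempty ∧
    I.card + J.card = k + 1 ∧ r = subOpNorm U I J }

lemma sCoef_eq (U : Matrix (Fin d) (Fin d) ℂ) (k : ℕ) : sCoef U k = sSup (cSet U k) := rfl

lemma subOpNorm_nonneg : 0 ≤ subOpNorm U I J := by
  rw [subOpNorm_eq]; exact Real.sSup_nonneg oSet_nonneg

lemma subOpNorm_le_one (hU : U ∈ Matrix.unitaryGroup (Fin d) ℂ) : subOpNorm U I J ≤ 1 := by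
  rw [subOpNorm_eq]; exact Real.sSup_le (oSet_le_one hU) zero_le_one

lemma sCoef_nonneg (k : ℕ) : 0 ≤ sCoef U k := by
  rw [sCoef_eq]
  exact Real.sSup_nonneg (by rintro r ⟨I, J, _, _, _, rfl⟩; exact subOpNorm_nonneg)

lemma sCoef_le_one (hU : U ∈ Matrix.unitaryGroup (Fin d) ℂ) (k : ℕ) : sCoef U k ≤ 1 := by
  rw [sCoef_eq]
  exact Real.sSup_le (by rintro r ⟨I, J, _, _, _, rfl⟩; exact subOpNorm_le_one hU) zero_le_one

lemma sCoef_bdd (hU : U ∈ Matrix.unitaryGroup (Fin d) ℂ) (k : ℕ) :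
    BddAbove (cSet U k) :=
  ⟨1, by rintro r ⟨I, J, _, _, _, rfl⟩; exact subOpNorm_le_one hU⟩

lemma subOpNorm_le_sCoef (hU : U ∈ Matrix.unitaryGroup (Fin d) ℂ) {k : ℕ}
    (hI : I.Nonempty) (hJ : J.Nonempty) (hc : I.card + J.card = k + 1) :
    subOpNorm U I J ≤ sCoef U k := by
  rw [sCoef_eq]; exact le_csSup (sCoef_bdd hU k) ⟨I, J, hI, hJ, hc, rfl⟩

lemma subOpNorm_mono_left (hU : U ∈ Matrix.unitaryGroup (Fin d) ℂ) {I' : Finset (Fin d)}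
    (hII : I ⊆ I') : subOpNorm U I J ≤ subOpNorm U I' J := by
  rw [subOpNorm_eq, subOpNorm_eq]
  refine Real.sSup_le (fun r hr => ?_) (Real.sSup_nonneg oSet_nonneg)
  obtain ⟨a, b, ha, hb, hna, hnb, hv⟩ := exists_rep U I J r hr
  have : r = ‖∑ i ∈ I', ∑ j ∈ J, conj (a i) * U i j * b j‖ := by
    rw [hv]; congr 1
    refine Finset.sum_subset hII (fun i _ hi => ?_)
    refine Finset.sum_eq_zero (fun j _ => ?_)
    rw [ha i hi]; simp
  rw [this]
  exact le_csSup (oSet_bdd hU) (mem_oSet U I' J a b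
    (fun i hi => ha i (fun h => hi (hII h))) hb hna hnb)

lemma sCoef_mono (hU : U ∈ Matrix.unitaryGroup (Fin d) ℂ) {k : ℕ}
    (hkd : k + 1 ≤ d) : sCoef U k ≤ sCoef U (k + 1) := by
  rw [sCoef_eq]
  refine Real.sSup_le ?_ (sCoef_nonneg _)
  rintro r ⟨I, J, hI, hJ, hc, rfl⟩
  have hIlt : I.card < d := by
    have := hJ.card_pos; omega
  have : I ≠ Finset.univ := by
    intro h; rw [h, Finset.card_univ, Fintype.card_fin] at hIlt; omega
  obtain ⟨i', hi'⟩ : ∃ i', i' ∉ I := by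
    by_contra h; push_neg at h
    exact this (Finset.eq_univ_iff_forall.2 h)
  refine (subOpNorm_mono_left hU (Finset.subset_insert i' I)).trans ?_
  refine subOpNorm_le_sCoef hU (Finset.insert_nonempty i' I) hJ ?_
  rw [Finset.card_insert_of_notMem hi']; omega

lemma ind_norm (i : Fin d) : ∑ i', ‖(if i' = i then (1:ℂ) else 0)‖^2 = 1 := by
  rw [Finset.sum_eq_single i (fun b _ hb => by rw [if_neg hb]; simp)
    (fun h => absurd (Finset.mem_univ i) h)]
  simp

lemma entry_le (hU : U ∈ Matrix.unitaryGroup (Fin d) ℂ) (i j : Fin d) :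
    ‖U i j‖ ≤ sCoef U 1 := by
  have hmem := mem_oSet U {i} {j} (fun i' => if i' = i then 1 else 0)
    (fun j' => if j' = j then 1 else 0)
    (fun i' hi' => if_neg (by simpa using hi')) (fun j' hj' => if_neg (by simpa using hj'))
    (ind_norm i) (ind_norm j)
  have hval : ‖∑ i' ∈ {i}, ∑ j' ∈ {j}, conj (if i' = i then (1:ℂ) else 0) * U i' j' *
      (if j' = j then (1:ℂ) else 0)‖ = ‖U i j‖ := by
    rw [Finset.sum_singleton, Finset.sum_singleton, if_pos rfl, if_pos rfl]
    simp
  rw [hval] at hmem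
  refine le_trans ?_ (subOpNorm_le_sCoef hU (Finset.singleton_nonempty i)
    (Finset.singleton_nonempty j) (by simp))
  rw [subOpNorm_eq]
  exact le_csSup (oSet_bdd hU) hmem

lemma row_norm (hU : U ∈ Matrix.unitaryGroup (Fin d) ℂ) (i0 : Fin d) :
    ∑ j, ‖U i0 j‖^2 = 1 := by
  have h2 : U * star U = 1 := hU.2
  have := congrFun (congrFun h2 i0) i0
  rw [Matrix.mul_apply, Matrix.one_apply_eq] at this
  have hcast : ((∑ j, ‖U i0 j‖^2 : ℝ) : ℂ) = 1 := by
    push_cast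
    rw [← this]
    refine Finset.sum_congr rfl fun j _ => ?_
    rw [Matrix.star_eq_conjTranspose, Matrix.conjTranspose_apply, RCLike.star_def,
      Complex.mul_conj, Complex.normSq_eq_norm_sq]
    push_cast; ring
  exact_mod_cast hcast

lemma sCoef_d (hU : U ∈ Matrix.unitaryGroup (Fin d) ℂ) (hd : 0 < d) : sCoef U d = 1 := by
  refine le_antisymm (sCoef_le_one hU d) ?_
  set i0 : Fin d := ⟨0, hd⟩
  have hb : ∑ j, ‖conj (U i0 j)‖^2 = 1 := by
    simpa [RCLike.norm_conj] using row_norm hU i0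
  have hmem := mem_oSet U {i0} Finset.univ (fun i' => if i' = i0 then 1 else 0)
    (fun j => conj (U i0 j))
    (fun i' hi' => if_neg (by simpa using hi')) (fun j hj => absurd (Finset.mem_univ j) hj)
    (ind_norm i0) hb
  have hval : ‖∑ i' ∈ {i0}, ∑ j ∈ Finset.univ, conj (if i' = i0 then (1:ℂ) else 0) * U i' j *
      conj (U i0 j)‖ = 1 := by
    rw [Finset.sum_singleton, if_pos rfl]
    have : ∑ j, conj (1:ℂ) * U i0 j * conj (U i0 j) = ((∑ j, ‖U i0 j‖^2 : ℝ) : ℂ) := by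
      push_cast
      refine Finset.sum_congr rfl fun j _ => ?_
      rw [map_one, one_mul, mul_comm, conj_mul_self]
      push_cast; ring
    rw [this, row_norm hU i0]
    simp
  rw [hval] at hmem
  refine le_trans ?_ (subOpNorm_le_sCoef hU (Finset.singleton_nonempty i0)
    ⟨i0, Finset.mem_univ i0⟩ (by simp [add_comm]))
  rw [subOpNorm_eq]
  exact le_csSup (oSet_bdd hU) hmem

lemma sum_norm_ite (I : Finset (Fin d)) (f : Fin d → ℂ) :
    ∑ i, ‖(if i ∈ I then f i else 0)‖^2 = ∑ i ∈ I, ‖f i‖^2 := by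
  have h : ∀ i, ‖(if i ∈ I then f i else 0)‖^2 = if i ∈ I then ‖f i‖^2 else 0 :=
    fun i => by split <;> simp
  simp_rw [h]
  rw [Finset.sum_ite_mem Finset.univ I (fun i => ‖f i‖^2), Finset.univ_inter]

lemma inner_collapse (a b : Fin d → ℂ) :
    ∑ i ∈ I, ∑ j ∈ J, conj (a i) * U i j * b j
      = ∑ i ∈ I, conj (a i) * (∑ j ∈ J, U i j * b j) := by
  refine Finset.sum_congr rfl fun i _ => ?_
  rw [Finset.mul_sum]
  exact Finset.sum_congr rfl fun j _ => (mul_assoc _ _ _)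

lemma stepA (hU : U ∈ Matrix.unitaryGroup (Fin d) ℂ) (hJI : J.card ≤ I.card) :
    subOpNorm U I J ≤ sCoef U 1 * I.card := by
  conv_lhs => rw [subOpNorm_eq]
  refine Real.sSup_le ?_ (mul_nonneg (sCoef_nonneg 1) (Nat.cast_nonneg _))
  intro r hr
  obtain ⟨a, b, ha, hb, hna, hnb, hv⟩ := exists_rep U I J r hr
  have h1 : r ≤ ∑ i ∈ I, ∑ j ∈ J, ‖a i‖ * sCoef U 1 * ‖b j‖ := by
    rw [hv]
    refine (norm_sum_le _ _).trans (Finset.sum_le_sum fun i _ => ?_)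
    refine (norm_sum_le _ _).trans (Finset.sum_le_sum fun j _ => ?_)
    rw [norm_mul, norm_mul, RCLike.norm_conj]
    exact mul_le_mul_of_nonneg_right
      (mul_le_mul_of_nonneg_left (entry_le hU i j) (norm_nonneg _)) (norm_nonneg _)
  have h2 : ∑ i ∈ I, ∑ j ∈ J, ‖a i‖ * sCoef U 1 * ‖b j‖
      = sCoef U 1 * ((∑ i ∈ I, ‖a i‖) * (∑ j ∈ J, ‖b j‖)) := by
    rw [Finset.sum_mul, Finset.mul_sum]
    refine Finset.sum_congr rfl fun i _ => ?_
    rw [Finset.mul_sum, Finset.mul_sum]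
    exact Finset.sum_congr rfl fun j _ => by ring
  have hA2 : (∑ i ∈ I, ‖a i‖)^2 ≤ (I.card : ℝ) := by
    have hcs := Finset.sum_mul_sq_le_sq_mul_sq I (fun i => ‖a i‖) (fun _ => 1)
    simp only [mul_one, one_pow, Finset.sum_const, nsmul_eq_mul] at hcs
    have hle : ∑ i ∈ I, ‖a i‖^2 ≤ 1 := by
      rw [← hna]
      exact Finset.sum_le_sum_of_subset_of_nonneg (Finset.subset_univ I)
        (fun i _ _ => sq_nonneg _)
    nlinarith [Nat.cast_nonneg (α := ℝ) I.card]
  have hB2 : (∑ j ∈ J, ‖b j‖)^2 ≤ (J.card : ℝ) := by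
    have hcs := Finset.sum_mul_sq_le_sq_mul_sq J (fun j => ‖b j‖) (fun _ => 1)
    simp only [mul_one, one_pow, Finset.sum_const, nsmul_eq_mul] at hcs
    have hle : ∑ j ∈ J, ‖b j‖^2 ≤ 1 := by
      rw [← hnb]
      exact Finset.sum_le_sum_of_subset_of_nonneg (Finset.subset_univ J)
        (fun j _ _ => sq_nonneg _)
    nlinarith [Nat.cast_nonneg (α := ℝ) J.card]
  have hAn : (0:ℝ) ≤ ∑ i ∈ I, ‖a i‖ := Finset.sum_nonneg fun i _ => norm_nonneg _
  have hBn : (0:ℝ) ≤ ∑ j ∈ J, ‖b j‖ := Finset.sum_nonneg fun j _ => norm_nonneg _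
  have hcast : (J.card : ℝ) ≤ (I.card : ℝ) := Nat.cast_le.2 hJI
  have hprod : (∑ i ∈ I, ‖a i‖) * (∑ j ∈ J, ‖b j‖) ≤ (I.card : ℝ) := by
    nlinarith [Nat.cast_nonneg (α := ℝ) I.card]
  calc r ≤ sCoef U 1 * ((∑ i ∈ I, ‖a i‖) * (∑ j ∈ J, ‖b j‖)) := h2 ▸ h1
    _ ≤ sCoef U 1 * I.card := mul_le_mul_of_nonneg_left hprod (sCoef_nonneg 1)

lemma stepB (hU : U ∈ Matrix.unitaryGroup (Fin d) ℂ) (hI2 : 2 ≤ I.card) (hJ : J.Nonempty) :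
    subOpNorm U I J ≤ sCoef U (I.card + J.card - 2) + subOpNorm U I J / I.card := by
  set s := sCoef U (I.card + J.card - 2) with hs
  have hsn : 0 ≤ s := sCoef_nonneg _
  have hncard : (0:ℝ) < I.card := by
    have : 0 < I.card := by omega
    exact_mod_cast this
  conv_lhs => rw [subOpNorm_eq]
  refine Real.sSup_le ?_ (add_nonneg hsn (div_nonneg subOpNorm_nonneg hncard.le))
  intro r hr
  obtain ⟨a, b, ha, hb, hna, hnb, hv⟩ := exists_rep U I J r hr
  set Bv : Fin d → ℂ := fun i => ∑ j ∈ J, U i j * b j with hBv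
  have hr' : r = ‖∑ i ∈ I, conj (a i) * Bv i‖ := by rw [hv, inner_collapse]
  set c2 := ∑ i ∈ I, ‖Bv i‖^2 with hc2
  have hc2n : 0 ≤ c2 := Finset.sum_nonneg fun i _ => sq_nonneg _
  -- (i) √c2 ≤ subOpNorm U I J
  have hcle : Real.sqrt c2 ≤ subOpNorm U I J := by
    rcases eq_or_lt_of_le hc2n with h0 | hpos
    · rw [← h0, Real.sqrt_zero]; exact subOpNorm_nonneg
    · set c := Real.sqrt c2 with hcdef
      have hcpos : 0 < c := Real.sqrt_pos.2 hpos
      have hcsq : c^2 = c2 := Real.sq_sqrt hc2n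
      have hnorm : ∑ i, ‖(if i ∈ I then Bv i / (c:ℂ) else 0)‖^2 = 1 := by
        rw [sum_norm_ite I (fun i => Bv i / (c:ℂ))]
        have he : ∀ i, ‖Bv i / (c:ℂ)‖^2 = ‖Bv i‖^2 / c^2 := fun i => by
          rw [norm_div, div_pow, Complex.norm_real, Real.norm_eq_abs, abs_of_pos hcpos]
        simp_rw [he]
        rw [← Finset.sum_div, ← hc2, hcsq, div_self (ne_of_gt hpos)]
      have hmem := mem_oSet U I J (fun i => if i ∈ I then Bv i / (c:ℂ) else 0) b
        (fun i hi => if_neg hi) hb hnorm hnb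
      have hval : ‖∑ i ∈ I, ∑ j ∈ J, conj (if i ∈ I then Bv i / (c:ℂ) else 0) * U i j * b j‖
          = c := by
        rw [inner_collapse]
        have he : ∀ i ∈ I, conj (if i ∈ I then Bv i / (c:ℂ) else 0) * Bv i
            = ((‖Bv i‖^2 / c : ℝ) : ℂ) := by
          intro i hi
          rw [if_pos hi, map_div₀, Complex.conj_ofReal, div_mul_eq_mul_div, conj_mul_self]
          push_cast; ring
        have hdivc : c2 / c = c := by
          rw [← hcsq, pow_two, mul_div_assoc, div_self (ne_of_gt hcpos), mul_one]
        have hsum : (∑ i ∈ I, conj (if i ∈ I then Bv i / (c:ℂ) else 0) * Bv i) = ((c:ℝ):ℂ) := by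
          rw [Finset.sum_congr rfl he, ← Complex.ofReal_sum, ← Finset.sum_div, ← hc2, hdivc]
        rw [hsum, Complex.norm_real, Real.norm_eq_abs, abs_of_pos hcpos]
      rw [hval] at hmem
      rw [subOpNorm_eq]
      exact le_csSup (oSet_bdd hU) hmem
  -- (ii) minimal index
  have hInon : I.Nonempty := Finset.card_pos.1 (by omega)
  obtain ⟨i0, hi0I, hmin⟩ := Finset.exists_min_image I (fun i => ‖a i‖ * ‖Bv i‖) hInon
  have hsum_ab : ∑ i ∈ I, ‖a i‖ * ‖Bv i‖ ≤ Real.sqrt c2 := by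
    have hcs := Finset.sum_mul_sq_le_sq_mul_sq I (fun i => ‖a i‖) (fun i => ‖Bv i‖)
    have hle : ∑ i ∈ I, ‖a i‖^2 ≤ 1 := by
      rw [← hna]
      exact Finset.sum_le_sum_of_subset_of_nonneg (Finset.subset_univ I)
        (fun i _ _ => sq_nonneg _)
    have hnn : (0:ℝ) ≤ ∑ i ∈ I, ‖a i‖ * ‖Bv i‖ :=
      Finset.sum_nonneg fun i _ => mul_nonneg (norm_nonneg _) (norm_nonneg _)
    have h1 : (∑ i ∈ I, ‖a i‖ * ‖Bv i‖)^2 ≤ c2 := by nlinarith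
    calc ∑ i ∈ I, ‖a i‖ * ‖Bv i‖ = Real.sqrt ((∑ i ∈ I, ‖a i‖ * ‖Bv i‖)^2) :=
          (Real.sqrt_sq hnn).symm
      _ ≤ Real.sqrt c2 := Real.sqrt_le_sqrt h1
  have hming : ‖a i0‖ * ‖Bv i0‖ ≤ subOpNorm U I J / I.card := by
    have hcard : (I.card : ℝ) * (‖a i0‖ * ‖Bv i0‖) ≤ ∑ i ∈ I, ‖a i‖ * ‖Bv i‖ := by
      have := Finset.card_nsmul_le_sum I (fun i => ‖a i‖ * ‖Bv i‖) _ (fun i hi => hmin i hi)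
      simpa [nsmul_eq_mul] using this
    rw [le_div_iff₀ hncard, mul_comm]
    exact hcard.trans (hsum_ab.trans hcle)
  -- (iii) triangle split
  have hsplit : r ≤ ‖∑ i ∈ I.erase i0, conj (a i) * Bv i‖ + ‖a i0‖ * ‖Bv i0‖ := by
    rw [hr', ← Finset.sum_erase_add I _ hi0I]
    refine (norm_add_le _ _).trans ?_
    gcongr
    rw [norm_mul, RCLike.norm_conj]
  -- (iv) erased term bounded by sCoef
  have hT : ‖∑ i ∈ I.erase i0, conj (a i) * Bv i‖ ≤ s := by
    set c'2 := ∑ i ∈ I.erase i0, ‖a i‖^2 with hc'2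
    have hc'n : 0 ≤ c'2 := Finset.sum_nonneg fun i _ => sq_nonneg _
    have hc'le : c'2 ≤ 1 := by
      rw [← hna]
      exact Finset.sum_le_sum_of_subset_of_nonneg
        ((Finset.erase_subset i0 I).trans (Finset.subset_univ I)) (fun i _ _ => sq_nonneg _)
    rcases eq_or_lt_of_le hc'n with h0 | hpos
    · have hz : ∀ i ∈ I.erase i0, a i = 0 := by
        intro i hi
        have := (Finset.sum_eq_zero_iff_of_nonneg (fun i _ => sq_nonneg ‖a i‖)).1 h0.symm i hi
        simpa using this
      rw [Finset.sum_eq_zero (fun i hi => by rw [hz i hi]; simp)]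
      simpa using hsn
    · set c' := Real.sqrt c'2 with hc'def
      have hc'pos : 0 < c' := Real.sqrt_pos.2 hpos
      have hc'sq : c'^2 = c'2 := Real.sq_sqrt hc'n
      have hc'le1 : c' ≤ 1 := by
        rw [show (1:ℝ) = Real.sqrt 1 from (Real.sqrt_one).symm]
        exact Real.sqrt_le_sqrt hc'le
      have hnorm : ∑ i, ‖(if i ∈ I.erase i0 then a i / (c':ℂ) else 0)‖^2 = 1 := by
        rw [sum_norm_ite (I.erase i0) (fun i => a i / (c':ℂ))]
        have he : ∀ i, ‖a i / (c':ℂ)‖^2 = ‖a i‖^2 / c'^2 := fun i => by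
          rw [norm_div, div_pow, Complex.norm_real, Real.norm_eq_abs, abs_of_pos hc'pos]
        simp_rw [he]
        rw [← Finset.sum_div, ← hc'2, hc'sq, div_self (ne_of_gt hpos)]
      have hmem := mem_oSet U (I.erase i0) J
        (fun i => if i ∈ I.erase i0 then a i / (c':ℂ) else 0) b
        (fun i hi => if_neg hi) hb hnorm hnb
      have hval : ‖∑ i ∈ I.erase i0, ∑ j ∈ J,
          conj (if i ∈ I.erase i0 then a i / (c':ℂ) else 0) * U i j * b j‖
          = ‖∑ i ∈ I.erase i0, conj (a i) * Bv i‖ / c' := by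
        rw [inner_collapse]
        have he : ∀ i ∈ I.erase i0, conj (if i ∈ I.erase i0 then a i / (c':ℂ) else 0) * Bv i
            = (conj (a i) * Bv i) / (c':ℂ) := by
          intro i hi
          rw [if_pos hi, map_div₀, Complex.conj_ofReal]
          ring
        rw [Finset.sum_congr rfl he, ← Finset.sum_div, norm_div, Complex.norm_real,
          Real.norm_eq_abs, abs_of_pos hc'pos]
      rw [hval] at hmem
      have hsub : ‖∑ i ∈ I.erase i0, conj (a i) * Bv i‖ / c' ≤ s := by
        refine le_trans ?_ (subOpNorm_le_sCoef hU
          (Finset.card_pos.1 (by rw [Finset.card_erase_of_mem hi0I]; omega)) hJ ?_)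
        · rw [subOpNorm_eq]
          exact le_csSup (oSet_bdd hU) hmem
        · rw [Finset.card_erase_of_mem hi0I]; omega
      have : ‖∑ i ∈ I.erase i0, conj (a i) * Bv i‖ = c' *
          (‖∑ i ∈ I.erase i0, conj (a i) * Bv i‖ / c') := by
        field_simp
      rw [this]
      calc c' * (‖∑ i ∈ I.erase i0, conj (a i) * Bv i‖ / c') ≤ 1 * s := by
            refine mul_le_mul hc'le1 hsub (div_nonneg (norm_nonneg _) hc'pos.le) zero_le_one
        _ = s := one_mul s
  calc r ≤ ‖∑ i ∈ I.erase i0, conj (a i) * Bv i‖ + ‖a i0‖ * ‖Bv i0‖ := hsplit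
    _ ≤ s + subOpNorm U I J / I.card := add_le_add hT hming

lemma key_row (hU : U ∈ Matrix.unitaryGroup (Fin d) ℂ) (hI2 : 2 ≤ I.card)
    (hJI : J.card ≤ I.card) (hJ : J.Nonempty) :
    subOpNorm U I J ≤ sCoef U (I.card + J.card - 2) + sCoef U 1 := by
  have hncard : (0:ℝ) < I.card := by
    have : 0 < I.card := by omega
    exact_mod_cast this
  have hB := stepB hU hI2 hJ
  have hA := stepA hU hJI
  have hdiv : subOpNorm U I J / I.card ≤ sCoef U 1 := by
    rw [div_le_iff₀ hncard]
    exact hA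
  linarith


lemma oSet_transpose_sub (U : Matrix (Fin d) (Fin d) ℂ) (I J : Finset (Fin d)) :
    oSet Uᴴ J I ⊆ oSet U I J := by
  intro r hr
  obtain ⟨a, b, ha, hb, hna, hnb, hv⟩ := exists_rep Uᴴ J I r hr
  have hval : r = ‖∑ i ∈ I, ∑ j ∈ J, conj (b i) * U i j * a j‖ := by
    rw [hv, ← RCLike.norm_conj]
    congr 1
    rw [map_sum, Finset.sum_comm]
    refine Finset.sum_congr rfl fun i _ => ?_
    rw [map_sum]
    refine Finset.sum_congr rfl fun j _ => ?_
    simp only [map_mul, Complex.conj_conj, Matrix.conjTranspose_apply, RCLike.star_def]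
    ring
  rw [hval]
  exact mem_oSet U I J b a hb ha hnb hna

lemma subOpNorm_transpose (U : Matrix (Fin d) (Fin d) ℂ) (I J : Finset (Fin d)) :
    subOpNorm Uᴴ J I = subOpNorm U I J := by
  rw [subOpNorm_eq, subOpNorm_eq]
  congr 1
  refine Set.Subset.antisymm (oSet_transpose_sub U I J) ?_
  have h := oSet_transpose_sub Uᴴ J I
  rwa [Matrix.conjTranspose_conjTranspose] at h

lemma sCoef_transpose (U : Matrix (Fin d) (Fin d) ℂ) (k : ℕ) :
    sCoef Uᴴ k = sCoef U k := by
  rw [sCoef_eq, sCoef_eq]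
  congr 1
  ext r
  constructor
  · rintro ⟨I, J, hI, hJ, hc, rfl⟩
    exact ⟨J, I, hJ, hI, by omega, subOpNorm_transpose U J I⟩
  · rintro ⟨I, J, hI, hJ, hc, rfl⟩
    exact ⟨J, I, hJ, hI, by omega,
      by rw [← subOpNorm_transpose Uᴴ J I, Matrix.conjTranspose_conjTranspose]⟩

lemma increment (hU : U ∈ Matrix.unitaryGroup (Fin d) ℂ) {k : ℕ} (hk : 1 ≤ k) :
    sCoef U (k + 1) ≤ sCoef U k + sCoef U 1 := by
  rw [sCoef_eq]
  refine Real.sSup_le ?_ (add_nonneg (sCoef_nonneg k) (sCoef_nonneg 1))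
  rintro r ⟨I, J, hI, hJ, hc, rfl⟩
  have hUt : Uᴴ ∈ Matrix.unitaryGroup (Fin d) ℂ := by
    rw [← Matrix.star_eq_conjTranspose]
    exact Unitary.star_mem hU
  rcases le_or_gt J.card I.card with h | h
  · have hI2 : 2 ≤ I.card := by omega
    have := key_row hU hI2 h hJ
    rwa [show I.card + J.card - 2 = k from by omega] at this
  · have hJ2 : 2 ≤ J.card := by omega
    have := key_row (I := J) (J := I) (U := Uᴴ) hUt hJ2 h.le hI
    rw [show J.card + I.card - 2 = k from by omega, sCoef_transpose, sCoef_transpose,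
      subOpNorm_transpose] at this
    exact this

lemma sCoef_one_pos (hU : U ∈ Matrix.unitaryGroup (Fin d) ℂ) (hd : 0 < d) :
    0 < sCoef U 1 := by
  set i0 : Fin d := ⟨0, hd⟩
  have hrow := row_norm hU i0
  have hex : ∃ j, U i0 j ≠ 0 := by
    by_contra h
    push_neg at h
    rw [Finset.sum_eq_zero (fun j _ => by rw [h j]; simp)] at hrow
    norm_num at hrow
  obtain ⟨j, hj⟩ := hex
  exact lt_of_lt_of_le (norm_pos_iff.2 hj) (entry_le hU i0 j)

/-- Tangent line inequality for `t ↦ -(t log t)` at `w`. -/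
lemma tangent {w q : ℝ} (hw : 0 < w) (hq : 0 ≤ q) :
    -(q * Real.log q) ≤ -(w * Real.log w) - (1 + Real.log w) * (q - w) := by
  rcases eq_or_lt_of_le hq with h0 | hqpos
  · rw [← h0]
    simp only [Real.log_zero, mul_zero, zero_mul, neg_zero, zero_sub, mul_neg]
    nlinarith [hw.le, Real.log_le_sub_one_of_pos hw]
  · have hlog := Real.log_le_sub_one_of_pos (div_pos hw hqpos)
    rw [Real.log_div (ne_of_gt hw) (ne_of_gt hqpos)] at hlog
    have h1 : q * (Real.log w - Real.log q) ≤ q * (w / q - 1) :=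
      mul_le_mul_of_nonneg_left hlog hqpos.le
    have h2 : q * (w / q - 1) = w - q := by field_simp
    nlinarith [h1, h2]
end Aux2

/-- For any unitary `U`, the vector `W = (s₁, s₂ - s₁, …, s_d - s_{d-1})` is majorized
by `Q^{(d-1)} = (R₁, R₂ - R₁, …, R_d - R_{d-1})` with `R_i = ((1 + s_i)/2)²`.
Consequently the direct-sum majorization bound `B_Maj2 = H(W)` is never weaker than the
tensor-product majorization bound `B_Maj1 = H(Q^{(d-1)})`. -/
theorem stmt_12 (d : ℕ) (hd : 2 ≤ d)
    (U : Matrix (Fin d) (Fin d) ℂ) (hU : U ∈ Matrix.unitaryGroup (Fin d) ℂ)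
    (R : ℕ → ℝ) (hR : ∀ k, R k = ((1 + sCoef U k) / 2) ^ 2)
    (Qd : Fin d → ℝ)
    (hQd : ∀ i : Fin d, Qd i = R (i.val + 1) - (if i.val = 0 then 0 else R i.val)) :
    Majorizes (Wvec U) Qd ∧ shannonEntropy Qd ≤ shannonEntropy (Wvec U) := by
  haveI : NeZero d := ⟨by omega⟩
  have hd0 : 0 < d := by omega
  have hsd : sCoef U d = 1 := Aux2.sCoef_d hU hd0
  have hs1 : 0 < sCoef U 1 := Aux2.sCoef_one_pos hU hd0
  -- pointwise descriptions
  have hQk : ∀ k : Fin d, k.val ≠ 0 →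
      Qd k = ((1 + sCoef U (k.val + 1)) / 2) ^ 2 - ((1 + sCoef U k.val) / 2) ^ 2 :=
    fun k hk => by rw [hQd k, if_neg hk, hR, hR]
  have hQ0 : Qd 0 = ((1 + sCoef U 1) / 2) ^ 2 := by
    rw [hQd 0]
    simp [hR]
  have hW0 : Wvec U 0 = sCoef U 1 := by simp [Wvec]
  have hWk : ∀ k : Fin d, k.val ≠ 0 →
      Wvec U k = sCoef U (k.val + 1) - sCoef U k.val :=
    fun k hk => by simp [Wvec, hk]
  have hfacts : ∀ k : Fin d, 0 ≤ sCoef U k.val ∧ sCoef U k.val ≤ sCoef U (k.val + 1)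
      ∧ sCoef U (k.val + 1) ≤ 1 :=
    fun k => ⟨Aux2.sCoef_nonneg _, Aux2.sCoef_mono hU (by omega), Aux2.sCoef_le_one hU _⟩
  have hWnn : ∀ k : Fin d, 0 ≤ Wvec U k := by
    intro k
    by_cases hk : k.val = 0
    · simp only [Wvec, hk, if_pos, sub_zero]
      exact Aux2.sCoef_nonneg _
    · rw [hWk k hk]
      have := (hfacts k).2.1
      linarith
  have hQleW : ∀ k : Fin d, k.val ≠ 0 → Qd k ≤ Wvec U k := by
    intro k hk
    rw [hQk k hk, hWk k hk]
    obtain ⟨h1, h2, h3⟩ := hfacts k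
    nlinarith
  have hQnn : ∀ k : Fin d, 0 ≤ Qd k := by
    intro k
    by_cases hk : k.val = 0
    · have hkeq : k = 0 := by
        apply Fin.ext
        simpa using hk
      rw [hkeq, hQ0]
      positivity
    · rw [hQk k hk]
      obtain ⟨h1, h2, h3⟩ := hfacts k
      nlinarith
  have hWleS1 : ∀ k : Fin d, Wvec U k ≤ sCoef U 1 := by
    intro k
    by_cases hk : k.val = 0
    · simp only [Wvec, hk, if_pos, sub_zero]
      norm_num
    · rw [hWk k hk]
      have := Aux2.increment hU (k := k.val) (by omega)
      linarith
  have hQleS1 : ∀ k : Fin d, k.val ≠ 0 → Qd k ≤ sCoef U 1 :=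
    fun k hk => (hQleW k hk).trans (hWleS1 k)
  have hW0leQ0 : Wvec U 0 ≤ Qd 0 := by
    rw [hW0, hQ0]
    nlinarith [sq_nonneg (1 - sCoef U 1)]
  -- sums
  have hsumW : ∑ k, Wvec U k = 1 := by
    have h2 : ∑ n ∈ Finset.range d, ((if n + 1 = 0 then (0:ℝ) else sCoef U (n + 1))
          - (if n = 0 then (0:ℝ) else sCoef U n))
        = (if d = 0 then (0:ℝ) else sCoef U d) - (if 0 = 0 then (0:ℝ) else sCoef U 0) :=
      Finset.sum_range_sub (fun n : ℕ => if n = 0 then (0:ℝ) else sCoef U n) d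
    have h1 : ∑ k : Fin d, Wvec U k
        = ∑ k : Fin d, ((if (k:ℕ) + 1 = 0 then (0:ℝ) else sCoef U ((k:ℕ) + 1))
          - (if (k:ℕ) = 0 then (0:ℝ) else sCoef U (k:ℕ))) :=
      Finset.sum_congr rfl (fun k _ => by simp [Wvec])
    rw [h1, Fin.sum_univ_eq_sum_range
      (fun n : ℕ => (if n + 1 = 0 then (0:ℝ) else sCoef U (n + 1))
        - (if n = 0 then (0:ℝ) else sCoef U n)) d, h2]
    rw [if_pos rfl, if_neg (by omega : d ≠ 0), hsd, sub_zero]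
  have hsumQ : ∑ k, Qd k = 1 := by
    have h2 : ∑ n ∈ Finset.range d, ((if n + 1 = 0 then (0:ℝ) else R (n + 1))
          - (if n = 0 then (0:ℝ) else R n))
        = (if d = 0 then (0:ℝ) else R d) - (if 0 = 0 then (0:ℝ) else R 0) :=
      Finset.sum_range_sub (fun n : ℕ => if n = 0 then (0:ℝ) else R n) d
    have h1 : ∑ k : Fin d, Qd k
        = ∑ k : Fin d, ((if (k:ℕ) + 1 = 0 then (0:ℝ) else R ((k:ℕ) + 1))
          - (if (k:ℕ) = 0 then (0:ℝ) else R (k:ℕ))) :=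
      Finset.sum_congr rfl (fun k _ => by rw [hQd k]; simp)
    rw [h1, Fin.sum_univ_eq_sum_range
      (fun n : ℕ => (if n + 1 = 0 then (0:ℝ) else R (n + 1))
        - (if n = 0 then (0:ℝ) else R n)) d, h2]
    rw [if_pos rfl, if_neg (by omega : d ≠ 0), hR, hsd, sub_zero]
    norm_num
  have hsumWQ : ∑ k, (Wvec U k - Qd k) = 0 := by
    rw [Finset.sum_sub_distrib, hsumW, hsumQ, sub_self]
  constructor
  · -- Majorization
    refine ⟨hsumW.trans hsumQ.symm, fun A => ?_⟩
    rcases Finset.eq_empty_or_nonempty A with rfl | hAne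
    · exact ⟨∅, le_rfl, by simp⟩
    by_cases h0 : (0 : Fin d) ∈ A
    · refine ⟨A, le_rfl, ?_⟩
      have h1 : ∑ k ∈ A, (Wvec U k - Qd k) ≤ ∑ k, (Wvec U k - Qd k) := by
        refine Finset.sum_le_sum_of_subset_of_nonneg (Finset.subset_univ A) ?_
        intro k _ hkA
        have hk : k.val ≠ 0 := by
          intro hk0
          have hke : k = 0 := Fin.ext (by simpa using hk0)
          exact hkA (hke ▸ h0)
        have := hQleW k hk
        linarith
      rw [hsumWQ] at h1
      rw [Finset.sum_sub_distrib] at h1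
      linarith
    · obtain ⟨j, hjA⟩ := hAne
      have hj0 : j.val ≠ 0 := by
        intro hj
        exact h0 (by rwa [show j = 0 from Fin.ext (by simpa using hj)] at hjA)
      have h0e : (0 : Fin d) ∉ A.erase j := fun h => h0 (Finset.mem_of_mem_erase h)
      refine ⟨insert 0 (A.erase j), ?_, ?_⟩
      · rw [Finset.card_insert_of_notMem h0e, Finset.card_erase_of_mem hjA]
        have := Finset.card_pos.2 ⟨j, hjA⟩
        omega
      · rw [Finset.sum_insert h0e]
        have hsplit : ∑ k ∈ A, Wvec U k
            = ∑ k ∈ A.erase j, Wvec U k + Wvec U j :=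
          (Finset.sum_erase_add A _ hjA).symm
        have hj_univ : j ∈ Finset.univ.erase (0 : Fin d) :=
          Finset.mem_erase.2 ⟨fun h => hj0 (by rw [h]; rfl), Finset.mem_univ j⟩
        have hsub : ∑ k ∈ A.erase j, (Wvec U k - Qd k)
            ≤ ∑ k ∈ (Finset.univ.erase (0 : Fin d)).erase j, (Wvec U k - Qd k) := by
          refine Finset.sum_le_sum_of_subset_of_nonneg ?_ ?_
          · intro k hk
            obtain ⟨hkj, hkA⟩ := Finset.mem_erase.1 hk
            refine Finset.mem_erase.2 ⟨hkj, Finset.mem_erase.2 ⟨?_, Finset.mem_univ k⟩⟩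
            intro hk0
            exact h0 (by rwa [← hk0])
          · intro k hk _
            have hk0 : k.val ≠ 0 := fun h =>
              (Finset.mem_erase.1 (Finset.mem_of_mem_erase hk)).1 (Fin.ext (by simpa using h))
            have := hQleW k hk0
            linarith
        have heq : ∑ k ∈ (Finset.univ.erase (0 : Fin d)).erase j, (Wvec U k - Qd k)
            = (Qd 0 - Wvec U 0) + (Qd j - Wvec U j) := by
          have e1 : ∑ k ∈ Finset.univ.erase (0 : Fin d), (Wvec U k - Qd k)
              + (Wvec U 0 - Qd 0) = ∑ k, (Wvec U k - Qd k) :=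
            Finset.sum_erase_add _ _ (Finset.mem_univ 0)
          have e2 : ∑ k ∈ (Finset.univ.erase (0 : Fin d)).erase j, (Wvec U k - Qd k)
              + (Wvec U j - Qd j) = ∑ k ∈ Finset.univ.erase (0 : Fin d), (Wvec U k - Qd k) :=
            Finset.sum_erase_add _ _ hj_univ
          rw [hsumWQ] at e1
          linarith
        have hQjW0 : Qd j ≤ Wvec U 0 := by
          rw [hW0]
          exact hQleS1 j hj0
        have hfin : ∑ k ∈ A.erase j, Wvec U k ≤ Qd 0 - Wvec U j + ∑ k ∈ A.erase j, Qd k := by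
          rw [show ∑ k ∈ A.erase j, Wvec U k
            = ∑ k ∈ A.erase j, (Wvec U k - Qd k) + ∑ k ∈ A.erase j, Qd k from by
              rw [Finset.sum_sub_distrib]; ring]
          have := hsub.trans_eq heq
          have hW0' := hW0
          linarith
        rw [hsplit]
        linarith
  · -- Entropy comparison
    set c : ℝ := -(1 + Real.log (sCoef U 1)) with hcdef
    have hkey : ∀ k : Fin d, -(Qd k * Real.log (Qd k))
        ≤ -(Wvec U k * Real.log (Wvec U k)) + c * (Qd k - Wvec U k) := by
      intro k
      by_cases hk : k.val = 0
      · have hkeq : k = 0 := Fin.ext (by simpa using hk)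
        subst hkeq
        rw [hW0]
        have ht := Aux2.tangent hs1 (hQnn 0)
        rw [hcdef]
        linarith [ht]
      · rcases eq_or_lt_of_le (hWnn k) with h0 | hWpos
        · have hq0 : Qd k = 0 := le_antisymm ((hQleW k hk).trans h0.ge) (hQnn k)
          rw [hq0, ← h0]
          simp
        · have ht := Aux2.tangent hWpos (hQnn k)
          have hslope : -(1 + Real.log (Wvec U k)) * (Qd k - Wvec U k)
              ≤ c * (Qd k - Wvec U k) := by
            have hlog : Real.log (Wvec U k) ≤ Real.log (sCoef U 1) :=
              Real.log_le_log hWpos (hWleS1 k)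
            have hqw : Qd k - Wvec U k ≤ 0 := by
              have := hQleW k hk
              linarith
            have hba : c ≤ -(1 + Real.log (Wvec U k)) := by rw [hcdef]; linarith
            exact mul_le_mul_of_nonpos_right hba hqw
          linarith
    have hsum := Finset.sum_le_sum (fun k (_ : k ∈ Finset.univ) => hkey k)
    have e1 : ∑ k, (-(Wvec U k * Real.log (Wvec U k)) + c * (Qd k - Wvec U k))
        = ∑ k, -(Wvec U k * Real.log (Wvec U k)) := by
      rw [Finset.sum_add_distrib, ← Finset.mul_sum]
      have : ∑ k, (Qd k - Wvec U k) = 0 := by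
        rw [Finset.sum_sub_distrib, hsumW, hsumQ, sub_self]
      rw [this, mul_zero, add_zero]
    rw [e1] at hsum
    simp only [shannonEntropy]
    rw [← Finset.sum_neg_distrib, ← Finset.sum_neg_distrib]
    exact hsum
end

section
/- (Direct-sum majorization for several measurements) Let U^{(1)},…,U^{(L)} be d×d unitary matrices with columns u_i^{(j)}, and let ψ ∈ ℂ^d be a unit vector; set p_i^{(j)} = |⟨u_i^{(j)}, ψ⟩|². Then the dL-dimensional vector (p_i^{(j)})_{i=1,…,d; j=1,…,L} is majorized by the vector (1, 𝒮₁−𝒮₀, 𝒮₂−𝒮₁, …, 𝒮_{dL−1}−𝒮_{dL−2}). -/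
open scoped BigOperators Matrix ComplexConjugate ComplexOrder

/-- The operator norm (largest singular value) of the `d × |S|` matrix whose columns are
the columns `u_i^{(j)}` of the unitaries `U j`, for `(i, j) ∈ S`. -/
noncomputable def colOpNorm {d L : ℕ} (U : Fin L → Matrix (Fin d) (Fin d) ℂ)
    (S : Finset (Fin d × Fin L)) : ℝ :=
  sSup { r : ℝ | ∃ (x : Fin d → ℂ) (y : S → ℂ),
    (∑ a, ‖x a‖ ^ 2 = 1) ∧ (∑ s, ‖y s‖ ^ 2 = 1) ∧
    r = ‖∑ a, ∑ s : S, (starRingEnd ℂ) (x a) * U s.1.2 a s.1.1 * y s‖ }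

/-- `multiS U k` is the coefficient `𝒮_k`: the maximal squared operator norm of a
`d × (k+1)` matrix formed by `k + 1` columns taken from the concatenation of the
unitaries `U j`. -/
noncomputable def multiS {d L : ℕ} (U : Fin L → Matrix (Fin d) (Fin d) ℂ) (k : ℕ) : ℝ :=
  (sSup { r : ℝ | ∃ S : Finset (Fin d × Fin L), S.card = k + 1 ∧ r = colOpNorm U S }) ^ 2

lemma cs_complex {n : Type*} [Fintype n] (f g : n → ℂ) :
    ‖∑ a, (starRingEnd ℂ) (f a) * g a‖ ≤
      Real.sqrt (∑ a, ‖f a‖ ^ 2) * Real.sqrt (∑ a, ‖g a‖ ^ 2) := by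
  have h := norm_inner_le_norm (𝕜 := ℂ) ((WithLp.equiv 2 (n → ℂ)).symm f)
    ((WithLp.equiv 2 (n → ℂ)).symm g)
  rw [Finset.sum_congr rfl fun a _ => mul_comm ((starRingEnd ℂ) (f a)) (g a)]
  simpa [EuclideanSpace.norm_eq, PiLp.inner_apply, RCLike.inner_apply] using h

lemma conj_mul_self_sum {n : Type*} [Fintype n] (f : n → ℂ) :
    ∑ a, (starRingEnd ℂ) (f a) * f a = ((∑ a, ‖f a‖ ^ 2 : ℝ) : ℂ) := by
  push_cast
  exact Finset.sum_congr rfl fun a _ => by rw [Complex.conj_mul']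

lemma col_unit {d : ℕ} (V : Matrix (Fin d) (Fin d) ℂ)
    (hV : V ∈ Matrix.unitaryGroup (Fin d) ℂ) (i : Fin d) :
    ∑ a, ‖V a i‖ ^ 2 = 1 := by
  have h1 : ∑ a, (starRingEnd ℂ) (V a i) * V a i = 1 := by
    simpa [Matrix.mul_apply, Matrix.star_apply, Matrix.one_apply] using
      congrFun (congrFun hV.1 i) i
  have h2 := conj_mul_self_sum (fun a => V a i)
  rw [h1] at h2
  exact_mod_cast h2.symm

lemma row_unit {d : ℕ} (V : Matrix (Fin d) (Fin d) ℂ)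
    (hV : V ∈ Matrix.unitaryGroup (Fin d) ℂ) (a : Fin d) :
    ∑ i, ‖V a i‖ ^ 2 = 1 := by
  have h1 : ∑ i, V a i * (starRingEnd ℂ) (V a i) = 1 := by
    simpa [Matrix.mul_apply, Matrix.star_apply, Matrix.one_apply] using
      congrFun (congrFun hV.2 a) a
  have h2 : ∑ i, (starRingEnd ℂ) (V a i) * V a i = 1 := by
    rw [← h1]; exact Finset.sum_congr rfl fun _ _ => mul_comm _ _
  have h3 := conj_mul_self_sum (fun i => V a i)
  rw [h2] at h3
  exact_mod_cast h3.symm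

lemma entry_le_one {d : ℕ} (V : Matrix (Fin d) (Fin d) ℂ)
    (hV : V ∈ Matrix.unitaryGroup (Fin d) ℂ) (a i : Fin d) : ‖V a i‖ ≤ 1 := by
  have h := col_unit V hV i
  have h2 : ‖V a i‖ ^ 2 ≤ 1 := by
    rw [← h]
    exact Finset.single_le_sum (f := fun b => ‖V b i‖ ^ 2) (fun b _ => sq_nonneg _) (Finset.mem_univ a)
  nlinarith [norm_nonneg (V a i)]

lemma unitary_isometry {d : ℕ} (V : Matrix (Fin d) (Fin d) ℂ)
    (hV : V ∈ Matrix.unitaryGroup (Fin d) ℂ) (x : Fin d → ℂ) :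
    ∑ i, ‖∑ a, (starRingEnd ℂ) (V a i) * x a‖ ^ 2 = ∑ a, ‖x a‖ ^ 2 := by
  have hVV : ∀ a b : Fin d, ∑ i, V a i * (starRingEnd ℂ) (V b i)
      = if a = b then 1 else 0 := by
    intro a b
    simpa [Matrix.mul_apply, Matrix.star_apply, Matrix.one_apply] using
      congrFun (congrFun hV.2 a) b
  have key : ((∑ i, ‖∑ a, (starRingEnd ℂ) (V a i) * x a‖ ^ 2 : ℝ) : ℂ)
      = ((∑ a, ‖x a‖ ^ 2 : ℝ) : ℂ) := by
    rw [← conj_mul_self_sum, ← conj_mul_self_sum]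
    calc ∑ i, (starRingEnd ℂ) (∑ a, (starRingEnd ℂ) (V a i) * x a)
          * (∑ b, (starRingEnd ℂ) (V b i) * x b)
        = ∑ i, ∑ a, ∑ b, (V a i * (starRingEnd ℂ) (x a))
            * ((starRingEnd ℂ) (V b i) * x b) := by
          refine Finset.sum_congr rfl fun i _ => ?_
          rw [map_sum, Finset.sum_mul_sum]
          refine Finset.sum_congr rfl fun a _ => Finset.sum_congr rfl fun b _ => ?_
          simp [map_mul]
      _ = ∑ a, ∑ b, ((starRingEnd ℂ) (x a) * x b) * ∑ i, V a i * (starRingEnd ℂ) (V b i) := by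
          rw [Finset.sum_comm]
          refine Finset.sum_congr rfl fun a _ => ?_
          rw [Finset.sum_comm]
          refine Finset.sum_congr rfl fun b _ => ?_
          rw [Finset.mul_sum]
          exact Finset.sum_congr rfl fun i _ => by ring
      _ = ∑ a, (starRingEnd ℂ) (x a) * x a := by
          refine Finset.sum_congr rfl fun a _ => ?_
          simp [hVV]
  exact_mod_cast key

section Col
variable {d L : ℕ} {U : Fin L → Matrix (Fin d) (Fin d) ℂ}

lemma colSet_bound (hU : ∀ j, U j ∈ Matrix.unitaryGroup (Fin d) ℂ)
    (S : Finset (Fin d × Fin L)) {r : ℝ}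
    (hr : r ∈ { r : ℝ | ∃ (x : Fin d → ℂ) (y : S → ℂ),
      (∑ a, ‖x a‖ ^ 2 = 1) ∧ (∑ s, ‖y s‖ ^ 2 = 1) ∧
      r = ‖∑ a, ∑ s : S, (starRingEnd ℂ) (x a) * U s.1.2 a s.1.1 * y s‖ }) :
    r ≤ (d : ℝ) * (d * L) := by
  obtain ⟨x, y, hx, hy, rfl⟩ := hr
  have hx1 : ∀ a, ‖x a‖ ≤ 1 := by
    intro a
    have h2 : ‖x a‖ ^ 2 ≤ 1 := by
      rw [← hx]
      exact Finset.single_le_sum (f := fun b => ‖x b‖ ^ 2) (fun _ _ => sq_nonneg _)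
        (Finset.mem_univ a)
    nlinarith [norm_nonneg (x a)]
  have hy1 : ∀ s : S, ‖y s‖ ≤ 1 := by
    intro s
    have h2 : ‖y s‖ ^ 2 ≤ 1 := by
      rw [← hy]
      exact Finset.single_le_sum (f := fun t => ‖y t‖ ^ 2) (fun _ _ => sq_nonneg _)
        (Finset.mem_univ s)
    nlinarith [norm_nonneg (y s)]
  have hcard : (S.card : ℝ) ≤ (d : ℝ) * L := by
    have h3 : S.card ≤ d * L := by simpa using Finset.card_le_univ S
    exact_mod_cast h3
  calc ‖∑ a, ∑ s : S, (starRingEnd ℂ) (x a) * U s.1.2 a s.1.1 * y s‖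
      ≤ ∑ a, ‖∑ s : S, (starRingEnd ℂ) (x a) * U s.1.2 a s.1.1 * y s‖ :=
        norm_sum_le _ _
    _ ≤ ∑ a, ∑ s : S, ‖(starRingEnd ℂ) (x a) * U s.1.2 a s.1.1 * y s‖ :=
        Finset.sum_le_sum fun a _ => norm_sum_le _ _
    _ ≤ ∑ a : Fin d, ∑ s : S, (1 : ℝ) := by
        refine Finset.sum_le_sum fun a _ => Finset.sum_le_sum fun s _ => ?_
        have e1 := entry_le_one (U s.1.2) (hU s.1.2) a s.1.1
        have e2 := hx1 a
        have e3 := hy1 s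
        have n1 := norm_nonneg (x a)
        have n2 := norm_nonneg (U s.1.2 a s.1.1)
        have n3 := norm_nonneg (y s)
        simp only [norm_mul, RCLike.norm_conj]
        exact mul_le_one₀ (mul_le_one₀ e2 n2 e1) n3 e3
    _ = (d : ℝ) * S.card := by
        simp [Finset.card_univ, Fintype.card_coe, mul_comm]
    _ ≤ (d : ℝ) * ((d : ℝ) * L) := by
        have : (0:ℝ) ≤ (d:ℝ) := by positivity
        nlinarith

lemma colOpNorm_nonneg (S : Finset (Fin d × Fin L)) : 0 ≤ colOpNorm U S := by
  refine Real.sSup_nonneg fun r hr => ?_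
  obtain ⟨x, y, _, _, rfl⟩ := hr
  exact norm_nonneg _

lemma bddAbove_colSet (hU : ∀ j, U j ∈ Matrix.unitaryGroup (Fin d) ℂ)
    (S : Finset (Fin d × Fin L)) :
    BddAbove { r : ℝ | ∃ (x : Fin d → ℂ) (y : S → ℂ),
      (∑ a, ‖x a‖ ^ 2 = 1) ∧ (∑ s, ‖y s‖ ^ 2 = 1) ∧
      r = ‖∑ a, ∑ s : S, (starRingEnd ℂ) (x a) * U s.1.2 a s.1.1 * y s‖ } :=
  ⟨(d : ℝ) * (d * L), fun _ hr => colSet_bound hU S hr⟩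

lemma colOpNorm_le_bound (hU : ∀ j, U j ∈ Matrix.unitaryGroup (Fin d) ℂ)
    (S : Finset (Fin d × Fin L)) : colOpNorm U S ≤ (d : ℝ) * (d * L) :=
  Real.sSup_le (fun _ hr => colSet_bound hU S hr) (by positivity)

lemma bddAbove_multiSet (hU : ∀ j, U j ∈ Matrix.unitaryGroup (Fin d) ℂ) (k : ℕ) :
    BddAbove { r : ℝ | ∃ S : Finset (Fin d × Fin L), S.card = k + 1 ∧ r = colOpNorm U S } := by
  refine ⟨(d : ℝ) * (d * L), ?_⟩
  rintro r ⟨S, hS, rfl⟩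
  exact colOpNorm_le_bound hU S

end Col

section Key
variable {d L : ℕ} {U : Fin L → Matrix (Fin d) (Fin d) ℂ}

lemma sum_sq_le_multiS (hU : ∀ j, U j ∈ Matrix.unitaryGroup (Fin d) ℂ)
    (ψ : Fin d → ℂ) (hψ : ∑ a, ‖ψ a‖ ^ 2 = 1)
    (S : Finset (Fin d × Fin L)) {k : ℕ} (hS : S.card = k + 1) :
    ∑ s : S, ‖∑ a, (starRingEnd ℂ) (U s.1.2 a s.1.1) * ψ a‖ ^ 2 ≤ multiS U k := by
  set g : S → ℂ := fun s => ∑ a, (starRingEnd ℂ) (U s.1.2 a s.1.1) * ψ a with hgdef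
  have hms : 0 ≤ multiS U k := by unfold multiS; positivity
  rcases eq_or_ne (∑ s : S, ‖g s‖ ^ 2) 0 with hc | hc
  · rw [hc]; exact hms
  · have hpos : 0 < ∑ s : S, ‖g s‖ ^ 2 :=
      lt_of_le_of_ne (Finset.sum_nonneg fun _ _ => sq_nonneg _) (Ne.symm hc)
    set c := Real.sqrt (∑ s : S, ‖g s‖ ^ 2) with hcdef
    have hcpos : 0 < c := Real.sqrt_pos.2 hpos
    have hcsq : c ^ 2 = ∑ s : S, ‖g s‖ ^ 2 := Real.sq_sqrt hpos.le
    have hcC : ((c : ℂ)) ≠ 0 := by exact_mod_cast hcpos.ne'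
    have hconj : ∀ s : S, (starRingEnd ℂ) (g s)
        = ∑ a, (starRingEnd ℂ) (ψ a) * U s.1.2 a s.1.1 := by
      intro s
      simp [g, map_sum, map_mul, mul_comm]
    have hval : ∑ a, ∑ s : S, (starRingEnd ℂ) (ψ a) * U s.1.2 a s.1.1 * (g s / (c : ℂ))
        = (c : ℂ) := by
      rw [Finset.sum_comm]
      have hterm : ∀ s : S,
          ∑ a, (starRingEnd ℂ) (ψ a) * U s.1.2 a s.1.1 * (g s / (c : ℂ))
            = (starRingEnd ℂ) (g s) * g s / (c : ℂ) := by
        intro s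
        rw [← Finset.sum_mul, ← hconj s, mul_div_assoc]
      rw [Finset.sum_congr rfl fun s _ => hterm s, ← Finset.sum_div,
        conj_mul_self_sum g, ← hcsq]
      push_cast
      field_simp
    have hynorm : ∑ s : S, ‖g s / (c : ℂ)‖ ^ 2 = 1 := by
      have h1 : ∀ s : S, ‖g s / (c : ℂ)‖ ^ 2 = ‖g s‖ ^ 2 / c ^ 2 := by
        intro s
        rw [norm_div, div_pow]
        congr 2
        rw [Complex.norm_real]
        exact abs_of_pos hcpos
      rw [Finset.sum_congr rfl fun s _ => h1 s, ← Finset.sum_div, ← hcsq,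
        div_self (pow_ne_zero 2 hcpos.ne')]
    have hvalnorm : c = ‖∑ a, ∑ s : S,
        (starRingEnd ℂ) (ψ a) * U s.1.2 a s.1.1 * (g s / (c : ℂ))‖ := by
      rw [hval, Complex.norm_real]
      exact (abs_of_pos hcpos).symm
    have hmem : c ∈ { r : ℝ | ∃ (x : Fin d → ℂ) (y : S → ℂ),
        (∑ a, ‖x a‖ ^ 2 = 1) ∧ (∑ s, ‖y s‖ ^ 2 = 1) ∧
        r = ‖∑ a, ∑ s : S, (starRingEnd ℂ) (x a) * U s.1.2 a s.1.1 * y s‖ } :=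
      ⟨ψ, fun s => g s / (c : ℂ), hψ, hynorm, hvalnorm⟩
    have h1 : c ≤ colOpNorm U S := le_csSup (bddAbove_colSet hU S) hmem
    have h2 : colOpNorm U S
        ≤ sSup { r : ℝ | ∃ S' : Finset (Fin d × Fin L), S'.card = k + 1 ∧ r = colOpNorm U S' } :=
      le_csSup (bddAbove_multiSet hU k) ⟨S, hS, rfl⟩
    have h3 : c ^ 2 ≤ multiS U k := by
      unfold multiS
      exact pow_le_pow_left₀ hcpos.le (h1.trans h2) 2
    rw [← hcsq]
    exact h3

end Key

section Vals
variable {d L : ℕ} {U : Fin L → Matrix (Fin d) (Fin d) ℂ}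

/-- rewrite the double sum as a single sum over columns -/
lemma double_sum_eq (S : Finset (Fin d × Fin L)) (x : Fin d → ℂ) (y : S → ℂ) :
    ∑ a, ∑ s : S, (starRingEnd ℂ) (x a) * U s.1.2 a s.1.1 * y s
      = ∑ s : S, (∑ a, (starRingEnd ℂ) (x a) * U s.1.2 a s.1.1) * y s := by
  rw [Finset.sum_comm]
  exact Finset.sum_congr rfl fun s _ => (Finset.sum_mul _ _ _).symm

lemma col_apply_norm (S : Finset (Fin d × Fin L)) (x : Fin d → ℂ) (s : S) :
    ‖∑ a, (starRingEnd ℂ) (x a) * U s.1.2 a s.1.1‖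
      = ‖∑ a, (starRingEnd ℂ) (U s.1.2 a s.1.1) * x a‖ := by
  rw [← RCLike.norm_conj (K := ℂ), map_sum]
  congr 1
  refine Finset.sum_congr rfl fun a _ => ?_
  simp [map_mul, mul_comm]

lemma norm_double_le (S : Finset (Fin d × Fin L)) (x : Fin d → ℂ) (y : S → ℂ)
    (hy : ∑ s, ‖y s‖ ^ 2 = 1) :
    ‖∑ a, ∑ s : S, (starRingEnd ℂ) (x a) * U s.1.2 a s.1.1 * y s‖
      ≤ Real.sqrt (∑ s : S, ‖∑ a, (starRingEnd ℂ) (U s.1.2 a s.1.1) * x a‖ ^ 2) := by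
  rw [double_sum_eq]
  have hcs := cs_complex
    (fun s : S => (starRingEnd ℂ) (∑ a, (starRingEnd ℂ) (x a) * U s.1.2 a s.1.1)) y
  simp only [Complex.conj_conj, RCLike.norm_conj] at hcs
  calc ‖∑ s : S, (∑ a, (starRingEnd ℂ) (x a) * U s.1.2 a s.1.1) * y s‖
      ≤ Real.sqrt (∑ s : S, ‖∑ a, (starRingEnd ℂ) (x a) * U s.1.2 a s.1.1‖ ^ 2)
        * Real.sqrt (∑ s, ‖y s‖ ^ 2) := hcs
    _ = Real.sqrt (∑ s : S, ‖∑ a, (starRingEnd ℂ) (U s.1.2 a s.1.1) * x a‖ ^ 2) := by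
        rw [hy, Real.sqrt_one, mul_one]
        congr 1
        exact Finset.sum_congr rfl fun s _ => by rw [col_apply_norm]

lemma colOpNorm_le_sqrt_card (hU : ∀ j, U j ∈ Matrix.unitaryGroup (Fin d) ℂ)
    (S : Finset (Fin d × Fin L)) : colOpNorm U S ≤ Real.sqrt S.card := by
  refine Real.sSup_le ?_ (Real.sqrt_nonneg _)
  rintro r ⟨x, y, hx, hy, rfl⟩
  refine (norm_double_le S x y hy).trans (Real.sqrt_le_sqrt ?_)
  calc ∑ s : S, ‖∑ a, (starRingEnd ℂ) (U s.1.2 a s.1.1) * x a‖ ^ 2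
      ≤ ∑ _s : S, (1 : ℝ) := by
        refine Finset.sum_le_sum fun s _ => ?_
        have h1 := cs_complex (fun a => U s.1.2 a s.1.1) x
        rw [col_unit (U s.1.2) (hU s.1.2) s.1.1, hx, Real.sqrt_one, mul_one] at h1
        nlinarith [norm_nonneg (∑ a, (starRingEnd ℂ) (U s.1.2 a s.1.1) * x a)]
    _ = S.card := by simp [Fintype.card_coe]

end Vals

section Univ
variable {d L : ℕ} {U : Fin L → Matrix (Fin d) (Fin d) ℂ}

lemma colOpNorm_univ_le (hU : ∀ j, U j ∈ Matrix.unitaryGroup (Fin d) ℂ) :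
    colOpNorm U (Finset.univ : Finset (Fin d × Fin L)) ≤ Real.sqrt L := by
  refine Real.sSup_le ?_ (Real.sqrt_nonneg _)
  rintro r ⟨x, y, hx, hy, rfl⟩
  refine (norm_double_le _ x y hy).trans (Real.sqrt_le_sqrt ?_)
  have h0 : ∑ s : (Finset.univ : Finset (Fin d × Fin L)),
      ‖∑ a, (starRingEnd ℂ) (U s.1.2 a s.1.1) * x a‖ ^ 2
      = ∑ z : Fin d × Fin L, ‖∑ a, (starRingEnd ℂ) (U z.2 a z.1) * x a‖ ^ 2 :=
    Finset.sum_coe_sort Finset.univ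
      (fun z : Fin d × Fin L => ‖∑ a, (starRingEnd ℂ) (U z.2 a z.1) * x a‖ ^ 2)
  rw [h0, Fintype.sum_prod_type_right]
  have h1 : ∀ j : Fin L, ∑ i, ‖∑ a, (starRingEnd ℂ) (U j a i) * x a‖ ^ 2 = 1 := by
    intro j
    rw [unitary_isometry (U j) (hU j) x, hx]
  rw [Finset.sum_congr rfl fun j _ => h1 j]
  simp

lemma sqrt_le_colOpNorm_univ (hd : 1 ≤ d) (hU : ∀ j, U j ∈ Matrix.unitaryGroup (Fin d) ℂ)
    (hL : 1 ≤ L) :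
    Real.sqrt L ≤ colOpNorm U (Finset.univ : Finset (Fin d × Fin L)) := by
  have hLpos : (0 : ℝ) < L := by exact_mod_cast hL
  have hsq : (0 : ℝ) < Real.sqrt L := Real.sqrt_pos.2 hLpos
  have hsqC : ((Real.sqrt L : ℝ) : ℂ) ≠ 0 := by exact_mod_cast hsq.ne'
  set i0 : Fin d := ⟨0, hd⟩
  set x : Fin d → ℂ := fun a => if a = i0 then 1 else 0 with hxdef
  set y : ((Finset.univ : Finset (Fin d × Fin L)) : Finset (Fin d × Fin L)) → ℂ :=
    fun s => (starRingEnd ℂ) (U s.1.2 i0 s.1.1) / ((Real.sqrt L : ℝ) : ℂ) with hydef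
  have hrow : ∑ z : Fin d × Fin L, ‖U z.2 i0 z.1‖ ^ 2 = (L : ℝ) := by
    rw [Fintype.sum_prod_type_right]
    rw [Finset.sum_congr rfl fun j _ => row_unit (U j) (hU j) i0]
    simp
  have hx : ∑ a, ‖x a‖ ^ 2 = 1 := by
    simp [hxdef, apply_ite (fun z : ℂ => ‖z‖), apply_ite (fun r : ℝ => r ^ 2),
      Finset.sum_ite_eq']
  have hy : ∑ s, ‖y s‖ ^ 2 = 1 := by
    have h1 : ∀ s : ((Finset.univ : Finset (Fin d × Fin L))),
        ‖y s‖ ^ 2 = ‖U s.1.2 i0 s.1.1‖ ^ 2 / L := by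
      intro s
      simp only [hydef, norm_div, RCLike.norm_conj, Complex.norm_real,
        Real.norm_eq_abs, div_pow, sq_abs]
      rw [Real.sq_sqrt hLpos.le]
    rw [Finset.sum_congr rfl fun s _ => h1 s, ← Finset.sum_div]
    have h2 : ∑ s : ((Finset.univ : Finset (Fin d × Fin L))),
        ‖U s.1.2 i0 s.1.1‖ ^ 2 = ∑ z : Fin d × Fin L, ‖U z.2 i0 z.1‖ ^ 2 :=
      Finset.sum_coe_sort Finset.univ (fun z : Fin d × Fin L => ‖U z.2 i0 z.1‖ ^ 2)
    rw [h2, hrow, div_self hLpos.ne']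
  have hxa : ∀ s : ((Finset.univ : Finset (Fin d × Fin L))),
      ∑ a, (starRingEnd ℂ) (x a) * U s.1.2 a s.1.1 = U s.1.2 i0 s.1.1 := by
    intro s
    rw [Finset.sum_eq_single i0]
    · simp [hxdef]
    · intro a _ ha
      simp [hxdef, ha]
    · intro h
      exact absurd (Finset.mem_univ i0) h
  have hval : ∑ a, ∑ s : (Finset.univ : Finset (Fin d × Fin L)),
      (starRingEnd ℂ) (x a) * U s.1.2 a s.1.1 * y s = ((Real.sqrt L : ℝ) : ℂ) := by
    rw [double_sum_eq]
    have h1 : ∀ s : ((Finset.univ : Finset (Fin d × Fin L))),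
        (∑ a, (starRingEnd ℂ) (x a) * U s.1.2 a s.1.1) * y s
          = ((‖U s.1.2 i0 s.1.1‖ ^ 2 : ℝ) : ℂ) / ((Real.sqrt L : ℝ) : ℂ) := by
      intro s
      simp only [hydef]
      rw [hxa s, ← mul_div_assoc, RCLike.mul_conj]
      push_cast
      try ring
      try exact mul_comm _ _
      try rw [mul_comm]
    rw [Finset.sum_congr rfl fun s _ => h1 s, ← Finset.sum_div]
    have h2 : ∑ s : ((Finset.univ : Finset (Fin d × Fin L))),
        ((‖U s.1.2 i0 s.1.1‖ ^ 2 : ℝ) : ℂ) = ((L : ℝ) : ℂ) := by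
      rw [← Complex.ofReal_sum]
      exact_mod_cast congrArg Complex.ofReal
        ((Finset.sum_coe_sort Finset.univ
          (fun z : Fin d × Fin L => ‖U z.2 i0 z.1‖ ^ 2)).trans hrow)
    rw [h2, div_eq_iff hsqC]
    norm_cast
    exact (Real.mul_self_sqrt hLpos.le).symm
  have hmem : Real.sqrt L ∈ { r : ℝ | ∃ (x : Fin d → ℂ)
      (y : ((Finset.univ : Finset (Fin d × Fin L))) → ℂ),
      (∑ a, ‖x a‖ ^ 2 = 1) ∧ (∑ s, ‖y s‖ ^ 2 = 1) ∧
      r = ‖∑ a, ∑ s : (Finset.univ : Finset (Fin d × Fin L)),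
        (starRingEnd ℂ) (x a) * U s.1.2 a s.1.1 * y s‖ } := by
    refine ⟨x, y, hx, hy, ?_⟩
    rw [hval, Complex.norm_real, Real.norm_eq_abs, abs_of_nonneg (Real.sqrt_nonneg _)]
  exact le_csSup (bddAbove_colSet hU _) hmem

end Univ

section Final
variable {d L : ℕ} {U : Fin L → Matrix (Fin d) (Fin d) ℂ}

lemma multiS_last (hd : 1 ≤ d) (hL : 1 ≤ L)
    (hU : ∀ j, U j ∈ Matrix.unitaryGroup (Fin d) ℂ) : multiS U (d * L - 1) = L := by
  have hdL : 1 ≤ d * L := by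
    calc 1 = 1 * 1 := by norm_num
    _ ≤ d * L := Nat.mul_le_mul hd hL
  have hcard : Fintype.card (Fin d × Fin L) = d * L := by simp
  have hset : { r : ℝ | ∃ S : Finset (Fin d × Fin L),
        S.card = (d * L - 1) + 1 ∧ r = colOpNorm U S }
      = {colOpNorm U (Finset.univ : Finset (Fin d × Fin L))} := by
    ext r
    simp only [Set.mem_setOf_eq, Set.mem_singleton_iff]
    constructor
    · rintro ⟨S, hS, rfl⟩
      rw [Finset.eq_univ_of_card S (by rw [hS, hcard]; omega)]
    · rintro rfl
      exact ⟨Finset.univ, by rw [Finset.card_univ, hcard]; omega, rfl⟩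
  have heq : colOpNorm U (Finset.univ : Finset (Fin d × Fin L)) = Real.sqrt L :=
    le_antisymm (colOpNorm_univ_le hU) (sqrt_le_colOpNorm_univ hd hU hL)
  unfold multiS
  rw [hset, csSup_singleton, heq, Real.sq_sqrt (by positivity)]

lemma multiS_zero (hd : 1 ≤ d) (hL : 1 ≤ L)
    (hU : ∀ j, U j ∈ Matrix.unitaryGroup (Fin d) ℂ) : multiS U 0 = 1 := by
  set i0 : Fin d := ⟨0, hd⟩
  set j0 : Fin L := ⟨0, hL⟩
  set S0 : Finset (Fin d × Fin L) := {(i0, j0)} with hS0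
  have hcard : S0.card = 0 + 1 := by simp [hS0]
  have hle : ∀ r ∈ { r : ℝ | ∃ S : Finset (Fin d × Fin L),
      S.card = 0 + 1 ∧ r = colOpNorm U S }, r ≤ 1 := by
    rintro r ⟨S, hS, rfl⟩
    have h := colOpNorm_le_sqrt_card hU S
    rw [hS] at h
    simpa using h
  have hone_mem : (1 : ℝ) ∈ { r : ℝ | ∃ (x : Fin d → ℂ) (y : S0 → ℂ),
      (∑ a, ‖x a‖ ^ 2 = 1) ∧ (∑ s, ‖y s‖ ^ 2 = 1) ∧
      r = ‖∑ a, ∑ s : S0, (starRingEnd ℂ) (x a) * U s.1.2 a s.1.1 * y s‖ } := by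
    refine ⟨fun a => U j0 a i0, fun _ => 1, col_unit (U j0) (hU j0) i0, ?_, ?_⟩
    · simp [Finset.sum_const, Fintype.card_coe, hS0]
    · have hin : ∀ a, ∑ s : S0, (starRingEnd ℂ) (U j0 a i0) * U s.1.2 a s.1.1 * (1 : ℂ)
          = (starRingEnd ℂ) (U j0 a i0) * U j0 a i0 := by
        intro a
        rw [Finset.sum_coe_sort S0
          (fun z : Fin d × Fin L => (starRingEnd ℂ) (U j0 a i0) * U z.2 a z.1 * 1)]
        simp [hS0]
      rw [Finset.sum_congr rfl fun a _ => hin a,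
        conj_mul_self_sum (fun a => U j0 a i0), col_unit (U j0) (hU j0) i0]
      simp
  have h1 : (1 : ℝ) ≤ colOpNorm U S0 := le_csSup (bddAbove_colSet hU S0) hone_mem
  have h2 : colOpNorm U S0 ≤ sSup { r : ℝ | ∃ S : Finset (Fin d × Fin L),
      S.card = 0 + 1 ∧ r = colOpNorm U S } :=
    le_csSup (bddAbove_multiSet hU 0) ⟨S0, hcard, rfl⟩
  have h3 : sSup { r : ℝ | ∃ S : Finset (Fin d × Fin L),
      S.card = 0 + 1 ∧ r = colOpNorm U S } ≤ 1 := Real.sSup_le hle zero_le_one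
  unfold multiS
  rw [le_antisymm h3 (h1.trans h2), one_pow]

lemma tele (g : ℕ → ℝ) (hg0 : g 0 = 1) (m : ℕ) :
    1 ≤ m →
      ∑ t ∈ Finset.range m, (if t = 0 then (1 : ℝ) else g t - g (t - 1)) = g (m - 1) := by
  induction m with
  | zero => exact fun h => absurd h (by omega)
  | succ n ih =>
    intro _
    rcases Nat.eq_zero_or_pos n with h | h
    · subst h
      simpa using hg0.symm
    · rw [Finset.sum_range_succ, ih (by omega), if_neg (by omega : n ≠ 0),
        Nat.succ_sub_one]
      ring

lemma sum_p_univ (hU : ∀ j, U j ∈ Matrix.unitaryGroup (Fin d) ℂ)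
    (ψ : Fin d → ℂ) (hψ : ∑ a, ‖ψ a‖ ^ 2 = 1) :
    ∑ z : Fin d × Fin L, ‖∑ a, (starRingEnd ℂ) (U z.2 a z.1) * ψ a‖ ^ 2 = L := by
  rw [Fintype.sum_prod_type_right]
  rw [Finset.sum_congr rfl fun j _ => by
    rw [unitary_isometry (U j) (hU j) ψ, hψ]]
  simp

end Final

theorem stmt_13' (d L : ℕ) (hd : 1 ≤ d) (hL : 1 ≤ L)
    (U : Fin L → Matrix (Fin d) (Fin d) ℂ)
    (hU : ∀ j, U j ∈ Matrix.unitaryGroup (Fin d) ℂ)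
    (ψ : Fin d → ℂ) (hψ : ∑ a, ‖ψ a‖ ^ 2 = 1)
    (p : Fin d × Fin L → ℝ)
    (hp : ∀ i j, p (i, j) = ‖∑ a, (starRingEnd ℂ) (U j a i) * ψ a‖ ^ 2) :
    (∑ i, p i = ∑ k : Fin (d * L),
        (if k.val = 0 then (1:ℝ) else multiS U k.val - multiS U (k.val - 1))) ∧
    ∀ A : Finset (Fin d × Fin L), ∃ B : Finset (Fin (d * L)), B.card ≤ A.card ∧
      ∑ i ∈ A, p i ≤ ∑ k ∈ B,
        (if k.val = 0 then (1:ℝ) else multiS U k.val - multiS U (k.val - 1)) := by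
  have hdL : 1 ≤ d * L := by
    calc 1 = 1 * 1 := by norm_num
    _ ≤ d * L := Nat.mul_le_mul hd hL
  have hpz : ∀ z : Fin d × Fin L, p z = ‖∑ a, (starRingEnd ℂ) (U z.2 a z.1) * ψ a‖ ^ 2 := by
    intro z
    have h := hp z.1 z.2
    rwa [Prod.mk.eta] at h
  constructor
  · have h1 : ∑ z : Fin d × Fin L, p z = (L : ℝ) := by
      rw [Finset.sum_congr rfl fun z _ => hpz z]
      exact sum_p_univ hU ψ hψ
    have h2 : ∑ k : Fin (d * L),
        (if k.val = 0 then (1 : ℝ) else multiS U k.val - multiS U (k.val - 1)) = L := by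
      rw [Fin.sum_univ_eq_sum_range
        (fun t => if t = 0 then (1 : ℝ) else multiS U t - multiS U (t - 1)) (d * L)]
      rw [tele (multiS U) (multiS_zero hd hL hU) (d * L) hdL]
      exact multiS_last hd hL hU
    rw [h1, h2]
  · intro A
    rcases Nat.eq_zero_or_pos A.card with hA | hA
    · refine ⟨∅, by simp, ?_⟩
      rw [Finset.card_eq_zero.1 hA]
      simp
    · have hmle : A.card ≤ d * L := by
        have h := Finset.card_le_univ A
        simpa using h
      refine ⟨Finset.image (Fin.castLE hmle) Finset.univ, ?_, ?_⟩
      · rw [Finset.card_image_of_injective _ (Fin.castLE_injective hmle)]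
        simp
      · have hsum : ∑ i ∈ A, p i
            = ∑ s : A, ‖∑ a, (starRingEnd ℂ) (U s.1.2 a s.1.1) * ψ a‖ ^ 2 := by
          rw [← Finset.sum_coe_sort A p]
          exact Finset.sum_congr rfl fun s _ => hpz s.1
        have hkey := sum_sq_le_multiS hU ψ hψ A (k := A.card - 1) (by omega)
        have hBsum : ∑ k ∈ Finset.image (Fin.castLE hmle) Finset.univ,
            (if k.val = 0 then (1 : ℝ) else multiS U k.val - multiS U (k.val - 1))
            = multiS U (A.card - 1) := by
          rw [Finset.sum_image (fun x _ y _ h => Fin.castLE_injective hmle h)]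
          have hc : ∀ t : Fin A.card,
              (if (Fin.castLE hmle t).val = 0 then (1 : ℝ)
                else multiS U (Fin.castLE hmle t).val
                  - multiS U ((Fin.castLE hmle t).val - 1))
              = (if (t : ℕ) = 0 then (1 : ℝ) else multiS U t - multiS U ((t : ℕ) - 1)) := by
            intro t
            simp [Fin.coe_castLE]
          rw [Finset.sum_congr rfl fun t _ => hc t,
            Fin.sum_univ_eq_sum_range
              (fun t => if t = 0 then (1 : ℝ) else multiS U t - multiS U (t - 1)) A.card,
            tele (multiS U) (multiS_zero hd hL hU) A.card hA]
        rw [hsum, hBsum]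
        exact hkey

/-- **Direct-sum majorization for several measurements**: for unitaries
`U 1, …, U L` with columns `u_i^{(j)}` and a unit vector `ψ`, the `dL`-dimensional
vector of probabilities `p (i, j) = |⟨u_i^{(j)}, ψ⟩|²` is majorized by
`(1, 𝒮₁ - 𝒮₀, 𝒮₂ - 𝒮₁, …, 𝒮_{dL-1} - 𝒮_{dL-2})`. -/
theorem stmt_13 (d L : ℕ) (hd : 1 ≤ d) (hL : 1 ≤ L)
    (U : Fin L → Matrix (Fin d) (Fin d) ℂ)
    (hU : ∀ j, U j ∈ Matrix.unitaryGroup (Fin d) ℂ)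
    (ψ : Fin d → ℂ) (hψ : ∑ a, ‖ψ a‖ ^ 2 = 1)
    (p : Fin d × Fin L → ℝ)
    (hp : ∀ i j, p (i, j) = ‖∑ a, (starRingEnd ℂ) (U j a i) * ψ a‖ ^ 2) :
    Majorizes p
      (fun k : Fin (d * L) =>
        if k.val = 0 then 1 else multiS U k.val - multiS U (k.val - 1)) := by
  exact stmt_13' d L hd hL U hU ψ hψ p hp
end
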